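/- For any positive integers n and c with c² < n/8, there exists a graph on n vertices containing at least n²/(16c²) pairwise edge-disjoint cliques each of size 2c, and containing no clique of size larger than 2c. -/

import Mathlib

section Construction
variable {n c p : ℕ} [NeZero p]

/-- embed group `i`, value `v` -/
def myι (hpn : 2 * c * p ≤ n) (i : Fin (2 * c)) (v : ZMod p) : Fin n :=
  ⟨i.val * p + v.val, by
    have hv := ZMod.val_lt v
    have h1 : i.val * p + v.val < (i.val + 1) * p := by
      rw [add_mul, one_mul]; omega
    have h2 : (i.val + 1) * p ≤ 2 * c * p :=
      Nat.mul_le_mul_right _ i.isLt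
    omega⟩

lemma myι_inj (hpn : 2 * c * p ≤ n) {i j : Fin (2 * c)} {v w : ZMod p}
    (h : myι hpn i v = myι hpn j w) : i = j ∧ v = w := by
  have hv := ZMod.val_lt v
  have hw := ZMod.val_lt w
  have h' : i.val * p + v.val = j.val * p + w.val := congrArg Fin.val h
  have hij : i.val = j.val := by
    rcases Nat.lt_trichotomy i.val j.val with hlt | heq | hgt
    · exfalso; nlinarith
    · exact heq
    · exfalso; nlinarith
  have hvw : v.val = w.val := by rw [hij] at h'; omega
  exact ⟨Fin.ext hij, ZMod.val_injective p hvw⟩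

/-- the clique corresponding to line `a*x+b` -/
def myLine (hpn : 2 * c * p ≤ n) (a b : ZMod p) : Set (Fin n) :=
  Set.range fun i : Fin (2 * c) => myι hpn i (a * (i : ℕ) + b)

def myG (hpn : 2 * c * p ≤ n) : SimpleGraph (Fin n) where
  Adj x y := x ≠ y ∧ ∃ a b : ZMod p, x ∈ myLine hpn a b ∧ y ∈ myLine hpn a b
  symm := by
    constructor
    rintro x y ⟨hxy, a, b, hx, hy⟩
    exact ⟨hxy.symm, a, b, hy, hx⟩
  loopless := by constructor; rintro x ⟨hxx, -⟩; exact hxx rfl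

lemma myLine_isClique (hpn : 2 * c * p ≤ n) (a b : ZMod p) :
    (myG hpn).IsClique (myLine hpn a b) := by
  intro x hx y hy hxy
  exact ⟨hxy, a, b, hx, hy⟩

lemma myLine_ncard (hpn : 2 * c * p ≤ n) (a b : ZMod p) :
    (myLine hpn a b).ncard = 2 * c := by
  have hinj : Function.Injective fun i : Fin (2 * c) => myι hpn i (a * (i : ℕ) + b) := by
    intro i j hij
    exact (myι_inj hpn hij).1
  rw [myLine, ← Set.image_univ, Set.ncard_image_of_injective _ hinj, Set.ncard_univ]
  simp [Nat.card_eq_fintype_card]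

lemma myι_div (hpn : 2 * c * p ≤ n) (i : Fin (2 * c)) (v : ZMod p) :
    (myι hpn i v).val / p = i.val := by
  have hv := ZMod.val_lt v
  have hp : 0 < p := hv.trans_le' (Nat.zero_le _) |>.trans_le (le_refl _)
  show (i.val * p + v.val) / p = i.val
  rw [mul_comm, Nat.mul_add_div (NeZero.pos p), Nat.div_eq_of_lt hv, add_zero]

lemma cliques_bound (hpn : 2 * c * p ≤ n) (hc : 0 < c) (s : Set (Fin n))
    (hs : (myG hpn).IsClique s) : s.ncard ≤ 2 * c := by
  by_cases hsub : s.Subsingleton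
  · calc s.ncard ≤ 1 := (Set.ncard_le_one (Set.toFinite s)).mpr fun a ha b hb => hsub ha hb
    _ ≤ 2 * c := by omega
  · -- every vertex of s lies in some line, and its group determines it
    have key : ∀ x ∈ s, ∀ y ∈ s, x ≠ y →
        x.val / p < 2 * c ∧ x.val / p ≠ y.val / p := by
      intro x hx y hy hxy
      obtain ⟨-, a, b, ⟨i, hi⟩, ⟨j, hj⟩⟩ := hs hx hy hxy
      have hij : i ≠ j := by rintro rfl; exact hxy (hi.symm.trans hj)
      rw [← hi, ← hj]
      rw [myι_div, myι_div]
      exact ⟨i.isLt, fun hh => hij (Fin.ext hh)⟩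
    have hinj : Set.InjOn (fun x : Fin n => x.val / p) s := by
      intro x hx y hy hxy
      by_contra hne
      exact (key x hx y hy hne).2 hxy
    have hnt := Set.not_subsingleton_iff.mp hsub
    have himg : (fun x : Fin n => x.val / p) '' s ⊆ ↑(Finset.range (2 * c)) := by
      rintro _ ⟨x, hx, rfl⟩
      obtain ⟨y, hy, hyx⟩ := hnt.exists_ne x
      simpa using (key x hx y hy (Ne.symm hyx)).1
    calc s.ncard = ((fun x : Fin n => x.val / p) '' s).ncard :=
          (Set.ncard_image_of_injOn hinj).symm
      _ ≤ (↑(Finset.range (2 * c)) : Set ℕ).ncard :=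
          Set.ncard_le_ncard himg (Finset.finite_toSet _)
      _ = 2 * c := by rw [Set.ncard_coe_finset, Finset.card_range]

lemma line_disjoint [Fact p.Prime] (hpn : 2 * c * p ≤ n) (hcp : 2 * c ≤ p)
    {a b a' b' : ZMod p} (hne : myLine hpn a b ≠ myLine hpn a' b') :
    (myLine hpn a b ∩ myLine hpn a' b').Subsingleton := by
  rintro x ⟨⟨i, hi⟩, ⟨i', hi'⟩⟩ y ⟨⟨j, hj⟩, ⟨j', hj'⟩⟩
  obtain ⟨rfl, hvi⟩ := myι_inj hpn (hi'.trans hi.symm)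
  obtain ⟨rfl, hvj⟩ := myι_inj hpn (hj'.trans hj.symm)
  by_cases hij : i' = j'
  · rw [← hi, ← hj, hij]
  · exfalso
    have hcast : ((i' : ℕ) : ZMod p) ≠ ((j' : ℕ) : ZMod p) := by
      intro hh
      apply hij
      have h1 := ZMod.val_cast_of_lt (i'.isLt.trans_le hcp)
      have h2 := ZMod.val_cast_of_lt (j'.isLt.trans_le hcp)
      exact Fin.ext (by rw [← h1, ← h2, hh])
    have haa : a = a' := by
      have e1 : (a - a') * ((i' : ℕ) : ZMod p) = b' - b := by linear_combination -hvi
      have e2 : (a - a') * ((j' : ℕ) : ZMod p) = b' - b := by linear_combination -hvj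
      have hz : (a - a') * (((i' : ℕ) : ZMod p) - ((j' : ℕ) : ZMod p)) = 0 := by
        rw [mul_sub, e1, e2, sub_self]
      rcases mul_eq_zero.mp hz with hz | hz
      · exact sub_eq_zero.mp hz
      · exact absurd (sub_eq_zero.mp hz) hcast
    have hbb : b = b' := by
      have h1 := ZMod.val_cast_of_lt (i'.isLt.trans_le hcp)
      subst haa
      linear_combination -hvi
    exact hne (by rw [haa, hbb])

lemma line_injective [Fact p.Prime] (hpn : 2 * c * p ≤ n) (hc : 0 < c) :
    Function.Injective fun ab : ZMod p × ZMod p => myLine hpn ab.1 ab.2 := by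
  rintro ⟨a, b⟩ ⟨a', b'⟩ hEq
  have hEq' : myLine hpn a b = myLine hpn a' b' := hEq
  simp only [Prod.mk.injEq]
  have hval : ∀ i : Fin (2 * c), a * (i : ℕ) + b = a' * (i : ℕ) + b' := by
    intro i
    have hmem : myι hpn i (a * (i : ℕ) + b) ∈ myLine hpn a' b' := by
      rw [← hEq']; exact ⟨i, rfl⟩
    obtain ⟨j, hj⟩ := hmem
    obtain ⟨h1, hv⟩ := myι_inj hpn hj
    cases h1
    exact hv.symm
  have h0 := hval ⟨0, by omega⟩
  have h1 := hval ⟨1, by omega⟩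
  simp only [Fin.val_mk, Nat.cast_zero, Nat.cast_one, mul_zero, mul_one, zero_add] at h0 h1
  constructor
  · linear_combination h1 - h0
  · linear_combination h0

lemma lines_ncard [Fact p.Prime] (hpn : 2 * c * p ≤ n) (hc : 0 < c) :
    (Set.range fun ab : ZMod p × ZMod p => myLine hpn ab.1 ab.2).ncard = p * p := by
  rw [← Set.image_univ, Set.ncard_image_of_injective _ (line_injective hpn hc),
    Set.ncard_univ]
  simp [Nat.card_eq_fintype_card, ZMod.card]

end Construction

/-- for positive integers `n`, `c` with `c² < n/8` there is a graph
on `n` vertices containing at least `n²/(16c²)` pairwise edge-disjoint cliques,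
each of size `2c`, and containing no clique of size larger than `2c`. -/
theorem stmt5 (n c : ℕ) (hn : 0 < n) (hc : 0 < c) (h : 8 * c ^ 2 < n) :
    ∃ (G : SimpleGraph (Fin n)) (𝒦 : Set (Set (Fin n))),
      (n : ℝ) ^ 2 / (16 * (c : ℝ) ^ 2) ≤ (𝒦.ncard : ℝ) ∧
      (∀ K ∈ 𝒦, G.IsClique K ∧ K.ncard = 2 * c) ∧
      (∀ K ∈ 𝒦, ∀ K' ∈ 𝒦, K ≠ K' → (K ∩ K').Subsingleton) ∧
      (∀ s : Set (Fin n), G.IsClique s → s.ncard ≤ 2 * c) := by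
  set m := n / (4 * c) with hm
  have h4c : 0 < 4 * c := by omega
  have hm2c : 2 * c ≤ m := by
    rw [hm, Nat.le_div_iff_mul_le h4c]
    nlinarith
  obtain ⟨p, hp, hmp, hp2m⟩ := Nat.exists_prime_lt_and_le_two_mul m (by omega)
  haveI : Fact p.Prime := ⟨hp⟩
  haveI : NeZero p := ⟨hp.pos.ne'⟩
  have hcp : 2 * c ≤ p := le_trans hm2c hmp.le
  have hpn : 2 * c * p ≤ n := by
    calc 2 * c * p ≤ 2 * c * (2 * m) := Nat.mul_le_mul_left _ hp2m
      _ = m * (4 * c) := by ring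
      _ ≤ n := Nat.div_mul_le_self n (4 * c)
  have hn4cp : n < 4 * c * p := by
    have e1 : 4 * c * (m + 1) ≤ 4 * c * p := Nat.mul_le_mul_left _ (Nat.succ_le_of_lt hmp)
    have h4 : n % (4 * c) < 4 * c := Nat.mod_lt _ h4c
    calc n = 4 * c * m + n % (4 * c) := (Nat.div_add_mod n (4 * c)).symm
      _ < 4 * c * m + 4 * c := by exact Nat.add_lt_add_left h4 _
      _ = 4 * c * (m + 1) := by ring
      _ ≤ 4 * c * p := e1
  refine ⟨myG hpn, Set.range fun ab : ZMod p × ZMod p => myLine hpn ab.1 ab.2, ?_, ?_, ?_, ?_⟩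
  · rw [lines_ncard hpn hc]
    have hr : (n : ℝ) < 4 * c * p := by exact_mod_cast hn4cp
    have hn0 : (0 : ℝ) ≤ n := Nat.cast_nonneg n
    rw [div_le_iff₀ (by positivity)]
    push_cast
    nlinarith
  · rintro K ⟨⟨a, b⟩, rfl⟩
    exact ⟨myLine_isClique hpn a b, myLine_ncard hpn a b⟩
  · rintro K ⟨⟨a, b⟩, rfl⟩ K' ⟨⟨a', b'⟩, rfl⟩ hne
    exact line_disjoint hpn hcp hne
  · exact fun s hs => cliques_bound hpn hc s hs
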